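/- arXiv:1404.7491 — 5 statements merged into one kernel-verified Lean document; each statement's English description precedes it below -/
import Mathlib

section
/- For every nonnegative integer x and complex z with |z| < 1 and |z/c| < 1, the generating function identity (1−z)^{−α} · ((1 − z/c)/(1 − z))^x = Σ_{m≥0} ((α)_m/m!) · M_m(x; α, c) · z^m holds, with the series converging absolutely. -/
open Complex

/-- Complex Pochhammer symbol. -/
noncomputable def pochC (α : ℂ) (k : ℕ) : ℂ := ∏ i ∈ Finset.range k, (α + i)

open Filter

lemma pochC_zero (a : ℂ) : pochC a 0 = 1 := Finset.prod_range_zero _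

lemma pochC_succ (a : ℂ) (n : ℕ) : pochC a (n + 1) = pochC a n * (a + n) :=
  Finset.prod_range_succ _ n

lemma pochC_ne_zero {a : ℂ} (ha : ∀ i : ℕ, a + (i : ℂ) ≠ 0) (n : ℕ) : pochC a n ≠ 0 :=
  Finset.prod_ne_zero_iff.mpr fun i _ => ha i

lemma pochC_add (a : ℂ) (k j : ℕ) : pochC a (k + j) = pochC a k * pochC (a + k) j := by
  rw [pochC, pochC, pochC, Finset.prod_range_add]
  congr 1
  refine Finset.prod_congr rfl fun i _ => ?_
  push_cast; ring

lemma coeff_succ (a : ℂ) (n : ℕ) :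
    pochC a (n + 1) / (n + 1).factorial = pochC a n / n.factorial * ((a + n) / ((n : ℂ) + 1)) := by
  have h1 : ((n.factorial : ℂ)) ≠ 0 := Nat.cast_ne_zero.mpr n.factorial_ne_zero
  have h2 : ((n : ℂ) + 1) ≠ 0 := Nat.cast_add_one_ne_zero n
  rw [pochC_succ, Nat.factorial_succ]
  push_cast
  rw [div_mul_div_comm]
  congr 1
  ring

lemma ratio_tendsto (a : ℂ) :
    Tendsto (fun n : ℕ => ‖(a + n) / ((n : ℂ) + 1)‖) atTop (nhds 1) := by
  have h0 : Tendsto (fun n : ℕ => (a - 1) / ((n : ℂ) + 1)) atTop (nhds 0) := by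
    rw [tendsto_zero_iff_norm_tendsto_zero]
    have : (fun n : ℕ => ‖(a - 1) / ((n : ℂ) + 1)‖) = fun n : ℕ => ‖a - 1‖ * (1 / ((n : ℝ) + 1)) := by
      funext n
      rw [norm_div]
      have : ‖((n : ℂ) + 1)‖ = (n : ℝ) + 1 := by
        rw [show ((n : ℂ) + 1) = ((n + 1 : ℕ) : ℂ) by push_cast; ring,
          Complex.norm_natCast]
        push_cast; ring
      rw [this]; ring
    rw [this]
    simpa using (tendsto_one_div_add_atTop_nhds_zero_nat.const_mul ‖a - 1‖)
  have h1 : Tendsto (fun n : ℕ => (a + n) / ((n : ℂ) + 1)) atTop (nhds 1) := by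
    have he : ∀ n : ℕ, (a + n) / ((n : ℂ) + 1) = 1 + (a - 1) / ((n : ℂ) + 1) := by
      intro n
      have h2 : ((n : ℂ) + 1) ≠ 0 := Nat.cast_add_one_ne_zero n
      field_simp
      ring
    simp_rw [he]
    simpa using (tendsto_const_nhds (x := (1:ℂ))).add h0
  simpa using h1.norm

lemma summable_norm_binom {a : ℂ} (ha : ∀ i : ℕ, a + (i : ℂ) ≠ 0) {y : ℂ} (hy : ‖y‖ < 1) :
    Summable (fun n : ℕ => ‖pochC a n / n.factorial * y ^ n‖) := by
  by_cases hy0 : y = 0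
  · apply summable_of_ne_finset_zero (s := {0})
    intro n hn
    simp only [Finset.mem_singleton] at hn
    simp [hy0, zero_pow hn]
  · apply summable_of_ratio_test_tendsto_lt_one hy (Eventually.of_forall ?_) ?_
    · intro n
      have h1 : ((n.factorial : ℂ)) ≠ 0 := Nat.cast_ne_zero.mpr n.factorial_ne_zero
      exact norm_ne_zero_iff.mpr
        (mul_ne_zero (div_ne_zero (pochC_ne_zero ha n) h1) (pow_ne_zero n hy0))
    · have he : ∀ n : ℕ,
          ‖‖pochC a (n+1) / (n+1).factorial * y ^ (n+1)‖‖ / ‖‖pochC a n / n.factorial * y ^ n‖‖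
          = ‖(a + n) / ((n : ℂ) + 1)‖ * ‖y‖ := by
        intro n
        have h1 : ((n.factorial : ℂ)) ≠ 0 := Nat.cast_ne_zero.mpr n.factorial_ne_zero
        have hcn : ‖pochC a n / n.factorial * y ^ n‖ ≠ 0 :=
          norm_ne_zero_iff.mpr (mul_ne_zero (div_ne_zero (pochC_ne_zero ha n) h1)
            (pow_ne_zero n hy0))
        rw [norm_norm, norm_norm, coeff_succ, pow_succ]
        rw [show pochC a n / n.factorial * ((a + n) / ((n : ℂ) + 1)) * (y ^ n * y)
            = (pochC a n / n.factorial * y ^ n) * ((a + n) / ((n : ℂ) + 1) * y) by ring]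
        rw [norm_mul (pochC a n / n.factorial * y ^ n), mul_comm, mul_div_assoc,
          div_self hcn, mul_one, norm_mul]
      simp_rw [he]
      simpa using (ratio_tendsto a).mul (tendsto_const_nhds (x := ‖y‖))

lemma binom_hasSum {a : ℂ} (ha : ∀ i : ℕ, a + (i : ℂ) ≠ 0) {z : ℂ} (hz : ‖z‖ < 1) :
    HasSum (fun n : ℕ => pochC a n / n.factorial * z ^ n) ((1 - z) ^ (-a)) := by
  classical
  set C : ℕ → ℂ := fun n => pochC a n / n.factorial with hC
  set r : ℝ := (1 + ‖z‖) / 2 with hr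
  set s : ℝ := (3 + ‖z‖) / 4 with hs
  have hzr : ‖z‖ < r := by rw [hr]; linarith
  have hr0 : 0 < r := by rw [hr]; positivity
  have hrs : r < s := by rw [hr, hs]; linarith
  have hs1 : s < 1 := by rw [hs]; linarith
  have hs0 : 0 < s := by rw [hs]; positivity
  -- summability on the closed domain
  have hsumnorm : ∀ y : ℂ, ‖y‖ < 1 → Summable (fun n : ℕ => ‖C n * y ^ n‖) :=
    fun y hy => summable_norm_binom ha hy
  have hsum : ∀ y : ℂ, ‖y‖ < 1 → Summable (fun n : ℕ => C n * y ^ n) :=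
    fun y hy => (hsumnorm y hy).of_norm
  -- bound for derivatives
  have hq1 : r / s < 1 := (div_lt_one hs0).mpr hrs
  have hq0 : 0 < r / s := div_pos hr0 hs0
  have hgeo : Summable (fun n : ℕ => (n : ℝ) * (r / s) ^ n) := by
    simpa using summable_pow_mul_geometric_of_norm_lt_one (R := ℝ) 1
      (by rwa [Real.norm_eq_abs, abs_of_pos hq0])
  set M : ℝ := ∑' n : ℕ, (n : ℝ) * (r / s) ^ n with hM
  have hM0 : 0 ≤ M := tsum_nonneg fun n => by positivity
  have hMn : ∀ n : ℕ, (n : ℝ) * (r / s) ^ n ≤ M :=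
    fun n => Summable.le_tsum hgeo n fun m _ => by positivity
  set u : ℕ → ℝ := fun n => ‖C n‖ * (M / r * s ^ n) with hu
  have hu_sum : Summable u := by
    have := ((hsumnorm (s : ℂ) (by simpa [Complex.norm_real, abs_of_pos hs0] using hs1)).mul_left
      (M / r))
    apply this.congr
    intro n
    rw [hu]
    simp only [norm_mul, norm_pow]
    rw [Complex.norm_real, Real.norm_eq_abs, abs_of_pos hs0]
    ring
  have hbound : ∀ n : ℕ, ∀ y : ℂ, y ∈ Metric.ball (0 : ℂ) r →
      ‖C n * ((n : ℂ) * y ^ (n - 1))‖ ≤ u n := by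
    intro n y hy
    have hyr : ‖y‖ < r := by simpa [Metric.mem_ball] using hy
    rw [norm_mul, norm_mul, norm_pow]
    have h1 : ‖(n : ℂ)‖ = (n : ℝ) := by simp
    rw [h1, hu]
    apply mul_le_mul_of_nonneg_left _ (norm_nonneg _)
    have h2 : ‖y‖ ^ (n - 1) ≤ r ^ (n - 1) :=
      pow_le_pow_left₀ (norm_nonneg y) hyr.le _
    calc (n : ℝ) * ‖y‖ ^ (n - 1) ≤ (n : ℝ) * r ^ (n - 1) := by
          apply mul_le_mul_of_nonneg_left h2 (Nat.cast_nonneg n)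
      _ ≤ M / r * s ^ n := by
          rcases Nat.eq_zero_or_pos n with h | h
          · subst h; simp; positivity
          · have hn1 : (n - 1) + 1 = n := Nat.succ_pred_eq_of_pos h
            have key : (n : ℝ) * (r / s) ^ n ≤ M := hMn n
            have : (n : ℝ) * r ^ n ≤ M * s ^ n := by
              have := mul_le_mul_of_nonneg_right key (by positivity : (0:ℝ) ≤ s ^ n)
              calc (n : ℝ) * r ^ n = (n : ℝ) * (r / s) ^ n * s ^ n := by
                    rw [mul_assoc, ← mul_pow, div_mul_cancel₀ r hs0.ne']
                _ ≤ M * s ^ n := this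
            rw [div_mul_eq_mul_div, le_div_iff₀ hr0]
            calc (n : ℝ) * r ^ (n - 1) * r = (n : ℝ) * r ^ n := by
                  rw [mul_assoc, ← pow_succ, hn1]
              _ ≤ M * s ^ n := this
  -- termwise derivatives
  set G : ℕ → ℂ → ℂ := fun n y => C n * ((n : ℂ) * y ^ (n - 1)) with hG
  set f : ℂ → ℂ := fun y => ∑' n, C n * y ^ n with hf
  have hr1 : r < 1 := hrs.trans hs1
  have hderiv_term : ∀ (n : ℕ) (y : ℂ), y ∈ Metric.ball (0 : ℂ) r →
      HasDerivAt (fun w => C n * w ^ n) (G n y) y :=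
    fun n y _ => (hasDerivAt_pow n y).const_mul (C n)
  have h0ball : (0 : ℂ) ∈ Metric.ball (0 : ℂ) r := by simp [hr0]
  have hsum0 : Summable (fun n : ℕ => C n * (0 : ℂ) ^ n) := hsum 0 (by simp)
  have hfderiv : ∀ y ∈ Metric.ball (0 : ℂ) r, HasDerivAt f (∑' n, G n y) y := by
    intro y hy
    exact hasDerivAt_tsum_of_isPreconnected hu_sum Metric.isOpen_ball
      (convex_ball 0 r).isPreconnected hderiv_term hbound h0ball hsum0 hy
  have hball_norm : ∀ y : ℂ, y ∈ Metric.ball (0 : ℂ) r → ‖y‖ < 1 := by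
    intro y hy
    rw [Metric.mem_ball, dist_zero_right] at hy
    exact hy.trans hr1
  -- functional equation (1 - y) * D y = a * f y
  have hkey : ∀ y ∈ Metric.ball (0 : ℂ) r, (1 - y) * (∑' n, G n y) = a * f y := by
    intro y hy
    have hy1 : ‖y‖ < 1 := hball_norm y hy
    have hS : HasSum (fun n => C n * y ^ n) (f y) := (hsum y hy1).hasSum
    have hDsummable : Summable (fun n => G n y) :=
      Summable.of_norm_bounded hu_sum (fun n => hbound n y hy)
    have hD : HasSum (fun n => G n y) (∑' n, G n y) := hDsummable.hasSum
    set D := ∑' n, G n y with hDdef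
    have hD' : HasSum (fun n => G (n + 1) y) D := by
      refine (hasSum_nat_add_iff (f := fun n => G n y) 1).mpr ?_
      simpa [hG] using hD
    have hterm1 : ∀ n : ℕ, G (n + 1) y = C n * (a + n) * y ^ n := by
      intro n
      have h2 : ((n : ℂ) + 1) ≠ 0 := Nat.cast_add_one_ne_zero n
      have h1 : ((n.factorial : ℂ)) ≠ 0 := Nat.cast_ne_zero.mpr n.factorial_ne_zero
      rw [hG]
      simp only [Nat.add_sub_cancel, hC]
      rw [coeff_succ, show ((n + 1 : ℕ) : ℂ) = (n : ℂ) + 1 by push_cast; ring]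
      field_simp
    have hE : HasSum (fun n => C n * (a + n) * y ^ n) D := by
      rwa [funext hterm1] at hD'
    have hF : HasSum (fun n => a * (C n * y ^ n) + G n y * y) (a * f y + D * y) :=
      (hS.mul_left a).add (hD.mul_right y)
    have hterm2 : ∀ n : ℕ, a * (C n * y ^ n) + G n y * y = C n * (a + n) * y ^ n := by
      intro n
      rw [hG]
      cases n with
      | zero => simp [mul_comm]
      | succ m =>
        simp only [Nat.add_sub_cancel]
        push_cast
        ring
    have hF' : HasSum (fun n => C n * (a + n) * y ^ n) (a * f y + D * y) := by
      rwa [funext hterm2] at hF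
    have hDval : D = a * f y + D * y := hE.unique hF'
    linear_combination hDval
  -- the product (1-y)^a * f y has zero derivative on the ball
  have hgconst : ∀ y ∈ Metric.ball (0 : ℂ) r,
      HasDerivAt (fun w => (1 - w) ^ a * f w) 0 y := by
    intro y hy
    have hy1 : ‖y‖ < 1 := hball_norm y hy
    have hy1' : (1 : ℂ) - y ≠ 0 := by
      intro h
      have : y = 1 := by linear_combination -h
      rw [this] at hy1; simp at hy1
    have hslit : (1 - y) ∈ Complex.slitPlane := by
      left
      have hre : |y.re| ≤ ‖y‖ := Complex.abs_re_le_norm y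
      have : y.re < 1 := lt_of_le_of_lt (le_trans (le_abs_self _) hre) hy1
      simp [Complex.sub_re]
      linarith
    have hc1 : HasDerivAt (fun w : ℂ => (1 - w) ^ a) (a * (1 - y) ^ (a - 1) * (-1)) y :=
      HasDerivAt.cpow_const (by simpa using (hasDerivAt_id y).const_sub 1) hslit
    have hc2 : HasDerivAt f (∑' n, G n y) y := hfderiv y hy
    have hprod := hc1.mul hc2
    refine hprod.congr_deriv (Eq.symm ?_)
    have hpow : (1 - y) ^ a = (1 - y) ^ (a - 1) * (1 - y) := by
      rw [show a = (a - 1) + 1 by ring, Complex.cpow_add _ _ hy1']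
      rw [Complex.cpow_one]
      ring_nf
    rw [hpow]
    have hk := hkey y hy
    linear_combination (-(1 - y) ^ (a - 1)) * hk
  -- constancy
  have hzball : z ∈ Metric.ball (0 : ℂ) r := by
    rw [Metric.mem_ball, dist_zero_right]; exact hzr
  have hconst : (1 - z) ^ a * f z = (1 - (0 : ℂ)) ^ a * f 0 := by
    have hle := Convex.norm_image_sub_le_of_norm_hasFDerivWithin_le
      (𝕜 := ℂ) (f := fun w => (1 - w) ^ a * f w)
      (f' := fun _ => ContinuousLinearMap.smulRight (1 : ℂ →L[ℂ] ℂ) (0 : ℂ)) (C := 0)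
      (s := Metric.ball (0 : ℂ) r)
      (fun w hw => ((hgconst w hw).hasFDerivAt).hasFDerivWithinAt)
      (fun w _ => by
        have h9 : ContinuousLinearMap.smulRight (1 : ℂ →L[ℂ] ℂ) (0 : ℂ) = 0 := by
          ext v; simp
        rw [h9]; simp)
      (convex_ball 0 r) h0ball hzball
    rw [zero_mul] at hle
    have := norm_le_zero_iff.mp hle
    have := sub_eq_zero.mp this
    exact this
  have hf0 : f 0 = 1 := by
    rw [hf]
    simp only []
    rw [tsum_eq_single 0 (fun n hn => by simp [zero_pow hn])]
    simp [hC, pochC_zero]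
  have hz1 : (1 : ℂ) - z ≠ 0 := by
    intro h
    have : z = 1 := by linear_combination -h
    rw [this] at hz; simp at hz
  have hcz : (1 - z) ^ a ≠ 0 := by
    rw [Complex.cpow_def_of_ne_zero hz1]; exact Complex.exp_ne_zero _
  have hfz : f z = (1 - z) ^ (-a) := by
    have h1 : (1 - z) ^ a * f z = 1 := by
      rw [hconst, hf0]; simp [Complex.one_cpow]
    rw [Complex.cpow_neg]
    exact eq_inv_of_mul_eq_one_left (by linear_combination h1)
  rw [← hfz]
  exact (hsum z hz).hasSum

/-- One-variable Meixner polynomial (complex parameters). -/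
noncomputable def MeixnerC (m x : ℕ) (α c : ℂ) : ℂ :=
  ∑ k ∈ Finset.range (m + 1),
    ((k.factorial : ℂ) / pochC α k) * (m.choose k) * (x.choose k) * (1 - 1 / c) ^ k

lemma coeff_identity (a c : ℂ) (ha : ∀ i : ℕ, a + (i : ℂ) ≠ 0) (x m : ℕ) :
    pochC a m / (m.factorial : ℂ) * MeixnerC m x a c
      = ∑ k ∈ Finset.range (x + 1), (x.choose k : ℂ) * (1 - 1 / c) ^ k *
          (if k ≤ m then pochC (a + k) (m - k) / (((m - k).factorial : ℕ) : ℂ) else 0) := by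
  rw [MeixnerC, Finset.mul_sum]
  rw [Finset.sum_subset (Finset.range_subset_range.mpr (by omega : m + 1 ≤ m + x + 2))
    (fun k _ hk => ?_), Finset.sum_subset (s₁ := Finset.range (x + 1))
    (Finset.range_subset_range.mpr (by omega : x + 1 ≤ m + x + 2)) (fun k _ hk => ?_)]
  rotate_left
  · have : x.choose k = 0 := Nat.choose_eq_zero_of_lt (by simp at hk; omega)
    simp [this]
  · have : m.choose k = 0 := Nat.choose_eq_zero_of_lt (by simp at hk; omega)
    simp [this]
  refine Finset.sum_congr rfl fun k _ => ?_
  by_cases hkm : k ≤ m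
  · rw [if_pos hkm]
    have h1 : pochC a m = pochC a k * pochC (a + k) (m - k) := by
      rw [← pochC_add]; congr 1; omega
    have h2 : ((m.choose k : ℕ) : ℂ) * (k.factorial : ℂ) * ((m - k).factorial : ℂ)
        = (m.factorial : ℂ) := by
      exact_mod_cast congrArg (fun t : ℕ => (t : ℂ)) (Nat.choose_mul_factorial_mul_factorial hkm)
    have hp : pochC a k ≠ 0 := pochC_ne_zero ha k
    have hf1 : ((m.factorial : ℕ) : ℂ) ≠ 0 := Nat.cast_ne_zero.mpr m.factorial_ne_zero
    have hf2 : ((k.factorial : ℕ) : ℂ) ≠ 0 := Nat.cast_ne_zero.mpr k.factorial_ne_zero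
    have hf3 : (((m - k).factorial : ℕ) : ℂ) ≠ 0 := Nat.cast_ne_zero.mpr (m - k).factorial_ne_zero
    rw [h1]
    field_simp
    linear_combination (pochC (a + (k : ℂ)) (m - k) * (x.choose k : ℂ)
      * (1 - 1/c) ^ k) * h2
  · rw [if_neg hkm]
    have : m.choose k = 0 := Nat.choose_eq_zero_of_lt (by omega)
    simp [this]

theorem meixner_generating_function (α : ℝ) (hα : ∀ k : ℕ, α ≠ -(k : ℝ))
    (c : ℂ) (hc : c ≠ 0) (x : ℕ) (z : ℂ) (hz : ‖z‖ < 1) (hzc : ‖z / c‖ < 1) :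
    HasSum (fun m : ℕ => (pochC (α : ℂ) m / (m.factorial : ℂ)) * MeixnerC m x (α : ℂ) c * z ^ m)
      ((1 - z) ^ (-(α : ℂ)) * (((1 - z / c) / (1 - z)) ^ x)) ∧
    Summable (fun m : ℕ =>
      ‖(pochC (α : ℂ) m / (m.factorial : ℂ)) * MeixnerC m x (α : ℂ) c * z ^ m‖) := by
  classical
  set a : ℂ := (α : ℂ) with ha_def
  have ha' : ∀ k i : ℕ, (a + (k : ℂ)) + (i : ℂ) ≠ 0 := by
    intro k i h
    have h2 : α + (k : ℝ) + (i : ℝ) = 0 := by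
      have := congrArg Complex.re h
      simpa [ha_def] using this
    exact hα (k + i) (by push_cast; linarith)
  have ha : ∀ i : ℕ, a + (i : ℂ) ≠ 0 := by
    intro i
    simpa using ha' 0 i
  set w : ℂ := 1 - 1 / c with hw
  set S : ℕ → ℕ → ℂ := fun k m => (x.choose k : ℂ) * w ^ k *
      (if k ≤ m then pochC (a + k) (m - k) / (((m - k).factorial : ℕ) : ℂ) else 0) with hS
  have hz1 : (1 : ℂ) - z ≠ 0 := by
    intro h
    have : z = 1 := by linear_combination -h
    rw [this] at hz; simp at hz
  -- per-k HasSum and norm-summability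
  have hk_hasSum : ∀ k : ℕ, HasSum (fun m => S k m * z ^ m)
      ((x.choose k : ℂ) * w ^ k * z ^ k * (1 - z) ^ (-(a + (k : ℂ)))) := by
    intro k
    have hbin := binom_hasSum (ha' k) hz
    have hmul := hbin.mul_left ((x.choose k : ℂ) * w ^ k * z ^ k)
    have hinj : Function.Injective (fun j : ℕ => j + k) := add_left_injective k
    have hvanish : ∀ m : ℕ, m ∉ Set.range (fun j : ℕ => j + k) → S k m * z ^ m = 0 := by
      intro m hm
      have hmk : m < k := by
        by_contra hcon
        exact hm ⟨m - k, by simp only []; omega⟩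
      rw [hS]
      simp only [if_neg (by omega : ¬ k ≤ m)]
      ring
    refine (hinj.hasSum_iff hvanish).mp ?_
    have hcomp : (fun j : ℕ => S k (j + k) * z ^ (j + k))
        = fun j : ℕ => (x.choose k : ℂ) * w ^ k * z ^ k *
            (pochC (a + k) j / (j.factorial : ℂ) * z ^ j) := by
      funext j
      rw [hS]
      simp only [if_pos (Nat.le_add_left k j), Nat.add_sub_cancel]
      rw [pow_add]
      ring
    have h5 : HasSum (fun j : ℕ => S k (j + k) * z ^ (j + k))
        ((x.choose k : ℂ) * w ^ k * z ^ k * (1 - z) ^ (-(a + (k : ℂ)))) := by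
      rw [hcomp]; exact hmul
    simpa [Function.comp_def] using h5
  have hk_normsum : ∀ k : ℕ, Summable (fun m => ‖S k m * z ^ m‖) := by
    intro k
    have hinj : Function.Injective (fun j : ℕ => j + k) := add_left_injective k
    have hvanish : ∀ m : ℕ, m ∉ Set.range (fun j : ℕ => j + k) → ‖S k m * z ^ m‖ = 0 := by
      intro m hm
      have hmk : m < k := by
        by_contra hcon
        exact hm ⟨m - k, by simp only []; omega⟩
      rw [hS]
      simp only [if_neg (by omega : ¬ k ≤ m)]
      simp
    refine (hinj.summable_iff hvanish).mp ?_
    have hcomp : (fun j : ℕ => ‖S k (j + k) * z ^ (j + k)‖)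
        = fun j : ℕ => ‖(x.choose k : ℂ) * w ^ k * z ^ k‖ *
            ‖pochC (a + k) j / (j.factorial : ℂ) * z ^ j‖ := by
      funext j
      rw [hS]
      simp only [if_pos (Nat.le_add_left k j), Nat.add_sub_cancel]
      rw [show (x.choose k : ℂ) * w ^ k * (pochC (a + k) j / ((j.factorial : ℕ) : ℂ))
          * z ^ (j + k) = ((x.choose k : ℂ) * w ^ k * z ^ k) *
          (pochC (a + k) j / ((j.factorial : ℕ) : ℂ) * z ^ j) by rw [pow_add]; ring,
        norm_mul]
    have h6 : Summable (fun j : ℕ => ‖(x.choose k : ℂ) * w ^ k * z ^ k‖ *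
        ‖pochC (a + k) j / (j.factorial : ℂ) * z ^ j‖) :=
      (summable_norm_binom (ha' k) hz).mul_left _
    have h7 : Summable (fun j : ℕ => ‖S k (j + k) * z ^ (j + k)‖) := by
      rw [hcomp]; exact h6
    simpa [Function.comp_def] using h7
  have hsum_hasSum : HasSum (fun m => ∑ k ∈ Finset.range (x + 1), S k m * z ^ m)
      (∑ k ∈ Finset.range (x + 1),
        (x.choose k : ℂ) * w ^ k * z ^ k * (1 - z) ^ (-(a + (k : ℂ)))) :=
    hasSum_sum (fun k _ => hk_hasSum k)
  have hfun : (fun m : ℕ => pochC a m / (m.factorial : ℂ) * MeixnerC m x a c * z ^ m)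
      = fun m => ∑ k ∈ Finset.range (x + 1), S k m * z ^ m := by
    funext m
    rw [coeff_identity a c ha x m, Finset.sum_mul]
  have hsum_val : (∑ k ∈ Finset.range (x + 1),
        (x.choose k : ℂ) * w ^ k * z ^ k * (1 - z) ^ (-(a + (k : ℂ))))
      = (1 - z) ^ (-a) * (((1 - z / c) / (1 - z)) ^ x) := by
    have hzk : ∀ k : ℕ, ((1 : ℂ) - z) ^ k ≠ 0 := fun k => pow_ne_zero k hz1
    have hsplit : ∀ k : ℕ, ((1 : ℂ) - z) ^ (-(a + (k : ℂ)))
        = (1 - z) ^ (-a) * ((1 - z) ^ k)⁻¹ := by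
      intro k
      rw [show -(a + (k : ℂ)) = -a + -(k : ℂ) by ring, Complex.cpow_add _ _ hz1,
        Complex.cpow_neg (1 - z) (k : ℂ), Complex.cpow_natCast]
    have hterm : ∀ k : ℕ, (x.choose k : ℂ) * w ^ k * z ^ k * (1 - z) ^ (-(a + (k : ℂ)))
        = (1 - z) ^ (-a) * ((w * z / (1 - z)) ^ k * 1 ^ (x - k) * (x.choose k : ℂ)) := by
      intro k
      rw [hsplit k, div_pow, mul_pow, one_pow]
      field_simp
    rw [Finset.sum_congr rfl fun k _ => hterm k, ← Finset.mul_sum, ← add_pow]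
    have hA : w * z / (1 - z) + 1 = (1 - z / c) / (1 - z) := by
      rw [hw]
      field_simp
      ring
    rw [hA]
  constructor
  · rw [hfun]
    exact hsum_val ▸ hsum_hasSum
  · have hgoal : Summable (fun m => ‖∑ k ∈ Finset.range (x + 1), S k m * z ^ m‖) := by
      refine Summable.of_nonneg_of_le (fun m => norm_nonneg _)
        (fun m => norm_sum_le _ _) ?_
      exact summable_sum (fun k _ => hk_normsum k)
    exact hgoal.congr (fun m => by rw [congrFun hfun m])
end

section
/- For every nonnegative integer x, nonzero parameter a, and complex z, the generating function identity e^z · (1 − z/a)^x = Σ_{m≥0} (1/m!) · C_m(x; a) · z^m holds, with the series converging absolutely for all z. -/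
open Complex

/-- One-variable Charlier polynomial (complex parameter). -/
noncomputable def CharlierC (m x : ℕ) (a : ℂ) : ℂ :=
  ∑ k ∈ Finset.range (m + 1),
    (k.factorial : ℂ) * (m.choose k) * (x.choose k) * (-1 / a) ^ k

theorem charlier_generating_function (x : ℕ) (a : ℂ) (ha : a ≠ 0) (z : ℂ) :
    HasSum (fun m : ℕ => (1 / (m.factorial : ℂ)) * CharlierC m x a * z ^ m)
      (Complex.exp z * (1 - z / a) ^ x) ∧
    Summable (fun m : ℕ => ‖(1 / (m.factorial : ℂ)) * CharlierC m x a * z ^ m‖) := by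
  set f : ℕ → ℂ := fun k => (x.choose k : ℂ) * (-z / a) ^ k with hf_def
  set g : ℕ → ℂ := fun n => z ^ n / n.factorial with hg_def
  have hf : Summable fun k => ‖f k‖ := by
    apply summable_of_finite_support
    apply Set.Finite.subset (Set.finite_Icc 0 x)
    intro k hk
    simp only [Function.mem_support] at hk
    by_contra hcon
    simp only [Set.mem_Icc, not_and_or, not_le] at hcon
    rcases hcon with h | h
    · omega
    · apply hk
      simp [hf_def, Nat.choose_eq_zero_of_lt h]
  have hgsum : HasSum g (Complex.exp z) := by
    rw [Complex.exp_eq_exp_ℂ]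
    exact NormedSpace.expSeries_div_hasSum_exp z
  have hg : Summable fun n => ‖g n‖ := by
    have := Real.summable_pow_div_factorial ‖z‖
    apply this.congr
    intro n
    simp [hg_def, norm_div]
  have hfsum : HasSum f ((1 - z / a) ^ x) := by
    have : (1 - z / a) ^ x = ∑ k ∈ Finset.range (x + 1), f k := by
      rw [sub_eq_add_neg, add_comm, add_pow]
      apply Finset.sum_congr rfl
      intro k hk
      simp only [hf_def, neg_div]
      ring
    rw [this]
    apply hasSum_sum_of_ne_finset_zero
    intro k hk
    simp only [Finset.mem_range, not_lt] at hk
    simp [hf_def, Nat.choose_eq_zero_of_lt (by omega : x < k)]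
  -- term equality
  have hterm : ∀ m : ℕ, (∑ k ∈ Finset.range (m + 1), f k * g (m - k)) =
      (1 / (m.factorial : ℂ)) * CharlierC m x a * z ^ m := by
    intro m
    rw [CharlierC, Finset.mul_sum, Finset.sum_mul]
    apply Finset.sum_congr rfl
    intro k hk
    simp only [Finset.mem_range, Nat.lt_succ_iff] at hk
    simp only [hf_def, hg_def]
    have hfac : (m.factorial : ℂ) = (k.factorial : ℂ) * (m.choose k : ℂ) * ((m - k).factorial : ℂ) := by
      have := Nat.choose_mul_factorial_mul_factorial hk
      push_cast [← this]
      ring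
    have hzk : z ^ m = z ^ k * z ^ (m - k) := by
      rw [← pow_add]; congr 1; omega
    have h1 : (k.factorial : ℂ) ≠ 0 := Nat.cast_ne_zero.2 k.factorial_ne_zero
    have h2 : ((m - k).factorial : ℂ) ≠ 0 := Nat.cast_ne_zero.2 (m - k).factorial_ne_zero
    have h3 : (m.choose k : ℂ) ≠ 0 := Nat.cast_ne_zero.2 (Nat.choose_pos hk).ne'
    rw [hzk, hfac]
    field_simp
    ring
  have hsummable : Summable fun m => ‖(1 / (m.factorial : ℂ)) * CharlierC m x a * z ^ m‖ := by
    have := summable_norm_sum_mul_range_of_summable_norm hf hg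
    apply this.congr
    intro m
    rw [hterm m]
  constructor
  · have h := (hasSum_sum_range_mul_of_summable_norm hf hg)
    rw [hfsum.tsum_eq, hgsum.tsum_eq] at h
    have h2 := h.congr_fun (fun m => (hterm m).symm)
    -- h2 : HasSum (fun m => ...) ((1 - z/a)^x * exp z)
    rw [mul_comm] at h2
    exact h2
  · exact hsummable
end

section
/- For a > 0 and nonnegative integers m, n, the orthogonality relation Σ_{x≥0} (a^x/x!) · C_m(x; a) · C_n(x; a) = a^{−m} · e^a · m! · δ_{m,n} holds, with the series converging absolutely. -/
open Finset

lemma exp_hs (a : ℝ) : HasSum (fun x : ℕ => a ^ x / (x.factorial : ℝ)) (Real.exp a) := by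
  rw [Real.exp_eq_exp_ℝ]
  exact NormedSpace.expSeries_div_hasSum_exp a

lemma g_hs (a : ℝ) (r : ℕ) :
    HasSum (fun x : ℕ => a ^ x / (x.factorial : ℝ) * ((x.choose r : ℕ) : ℝ))
      (Real.exp a * (a ^ r / (r.factorial : ℝ))) := by
  rw [← hasSum_nat_add_iff' r]
  have h0 : ∑ i ∈ range r, a ^ i / (i.factorial : ℝ) * ((i.choose r : ℕ) : ℝ) = 0 := by
    apply Finset.sum_eq_zero
    intro i hi
    rw [Nat.choose_eq_zero_of_lt (mem_range.mp hi)]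
    simp
  rw [h0, sub_zero]
  have key : ∀ y : ℕ, a ^ (y + r) / ((y + r).factorial : ℝ) * (((y + r).choose r : ℕ) : ℝ)
      = (a ^ r / (r.factorial : ℝ)) * (a ^ y / (y.factorial : ℝ)) := by
    intro y
    have h1 : (y + r).choose r * r.factorial * y.factorial = (y + r).factorial := by
      have := Nat.choose_mul_factorial_mul_factorial (Nat.le_add_left r y)
      simpa using this
    have h2 : ((y + r).factorial : ℝ) = ((y + r).choose r : ℝ) * r.factorial * y.factorial := by
      exact_mod_cast h1.symm
    have hf : ((y+r).factorial : ℝ) ≠ 0 := Nat.cast_ne_zero.mpr (Nat.factorial_ne_zero _)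
    have hr : (r.factorial : ℝ) ≠ 0 := Nat.cast_ne_zero.mpr (Nat.factorial_ne_zero _)
    have hy : (y.factorial : ℝ) ≠ 0 := Nat.cast_ne_zero.mpr (Nat.factorial_ne_zero _)
    have hc : ((y+r).choose r : ℝ) ≠ 0 := by
      have := Nat.choose_pos (Nat.le_add_left r y)
      positivity
    field_simp [h2, pow_add]
    rw [h2]; ring
  simp_rw [key]
  have := (exp_hs a).mul_left (a ^ r / (r.factorial : ℝ))
  rw [mul_comm (Real.exp a)]
  exact this

lemma A_hs (a : ℝ) (j k : ℕ) :
    HasSum (fun x : ℕ => a ^ x / (x.factorial : ℝ) * (x.choose j : ℝ) * (x.choose k : ℝ))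
      (∑ i ∈ range (k + 1),
        (a ^ j / (j.factorial : ℝ) * (j.choose i : ℝ)) *
          (Real.exp a * (a ^ (k - i) / ((k - i).factorial : ℝ)))) := by
  rw [← hasSum_nat_add_iff' j]
  have h0 : ∑ x ∈ range j, a ^ x / (x.factorial : ℝ) * (x.choose j : ℝ) * (x.choose k : ℝ) = 0 := by
    apply Finset.sum_eq_zero
    intro x hx
    rw [Nat.choose_eq_zero_of_lt (mem_range.mp hx)]
    simp
  rw [h0, sub_zero]
  have key : ∀ y : ℕ,
      a ^ (y + j) / ((y + j).factorial : ℝ) * ((y + j).choose j : ℝ) * ((y + j).choose k : ℝ)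
      = ∑ i ∈ range (k + 1),
          (a ^ j / (j.factorial : ℝ) * (j.choose i : ℝ)) *
            (a ^ y / (y.factorial : ℝ) * (y.choose (k - i) : ℝ)) := by
    intro y
    have hv : ((y + j).choose k : ℝ) = ∑ i ∈ range (k + 1), (j.choose i : ℝ) * (y.choose (k - i) : ℝ) := by
      have := Nat.add_choose_eq j y k
      rw [Finset.Nat.sum_antidiagonal_eq_sum_range_succ_mk] at this
      rw [add_comm y j, this]
      push_cast
      rfl
    have h1 : (y + j).choose j * j.factorial * y.factorial = (y + j).factorial := by
      have := Nat.choose_mul_factorial_mul_factorial (Nat.le_add_left j y)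
      simpa using this
    have h2 : ((y + j).factorial : ℝ) = ((y + j).choose j : ℝ) * j.factorial * y.factorial := by
      exact_mod_cast h1.symm
    have hj : (j.factorial : ℝ) ≠ 0 := Nat.cast_ne_zero.mpr (Nat.factorial_ne_zero _)
    have hy : (y.factorial : ℝ) ≠ 0 := Nat.cast_ne_zero.mpr (Nat.factorial_ne_zero _)
    have hc : ((y+j).choose j : ℝ) ≠ 0 := by
      have := Nat.choose_pos (Nat.le_add_left j y)
      positivity
    rw [hv, Finset.mul_sum]
    apply Finset.sum_congr rfl
    intro i _
    field_simp [h2, pow_add]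
    rw [h2]; ring
  simp_rw [key]
  apply hasSum_sum
  intro i _
  exact (g_hs a (k - i)).mul_left _

lemma K_id (m i : ℕ) :
    ∑ j ∈ range (m + 1), (m.choose j : ℝ) * (j.choose i : ℝ) * (-1) ^ j
      = if i = m then (-1 : ℝ) ^ m else 0 := by
  by_cases him : i ≤ m
  · have hsub : ∑ j ∈ range (m + 1), (m.choose j : ℝ) * (j.choose i : ℝ) * (-1) ^ j
        = ∑ j ∈ Ico i (m + 1), (m.choose j : ℝ) * (j.choose i : ℝ) * (-1) ^ j := by
      rw [Finset.range_eq_Ico]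
      rw [← Finset.sum_Ico_consecutive _ (Nat.zero_le i) (by omega)]
      have : ∑ j ∈ Ico 0 i, (m.choose j : ℝ) * (j.choose i : ℝ) * (-1) ^ j = 0 := by
        apply Finset.sum_eq_zero
        intro j hj
        rw [Nat.choose_eq_zero_of_lt (mem_Ico.mp hj).2]
        simp
      rw [this, zero_add]
    rw [hsub, Finset.sum_Ico_eq_sum_range]
    have hlen : m + 1 - i = m - i + 1 := by omega
    rw [hlen]
    have key : ∀ t ∈ range (m - i + 1),
        (m.choose (i + t) : ℝ) * ((i + t).choose i : ℝ) * (-1) ^ (i + t)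
        = ((m.choose i : ℝ) * (-1) ^ i) * (((m - i).choose t : ℝ) * (-1) ^ t) := by
      intro t ht
      have ht' : i + t ≤ m := by
        have := mem_range.mp ht; omega
      have := Nat.choose_mul (n := m) (Nat.le_add_right i t)
      have hcast : (m.choose (i + t) : ℝ) * ((i + t).choose i : ℝ)
          = (m.choose i : ℝ) * ((m - i).choose (i + t - i) : ℝ) := by exact_mod_cast this
      rw [hcast]
      have : i + t - i = t := by omega
      rw [this, pow_add]
      ring
    rw [Finset.sum_congr rfl key, ← Finset.mul_sum]
    have halt : ∑ t ∈ range (m - i + 1), ((m - i).choose t : ℝ) * (-1) ^ t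
        = if m - i = 0 then 1 else 0 := by
      have := Int.alternating_sum_range_choose (n := m - i)
      have h2 : ((∑ t ∈ range (m - i + 1), ((-1) ^ t * (m - i).choose t : ℤ) : ℤ) : ℝ)
          = ∑ t ∈ range (m - i + 1), ((m - i).choose t : ℝ) * (-1) ^ t := by
        push_cast
        apply Finset.sum_congr rfl
        intro t _
        ring
      rw [← h2, this]
      split <;> simp
    rw [halt]
    by_cases h : i = m
    · subst h; simp
    · have : m - i ≠ 0 := by omega
      rw [if_neg this, if_neg h, mul_zero]
  · rw [if_neg (by omega)]
    apply Finset.sum_eq_zero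
    intro j hj
    have : j < i := by have := mem_range.mp hj; omega
    rw [Nat.choose_eq_zero_of_lt this]
    simp

noncomputable def Charlier (m x : ℕ) (a : ℝ) : ℝ :=
  ∑ k ∈ Finset.range (m + 1),
    (k.factorial : ℝ) * (m.choose k) * (x.choose k) * (-1 / a) ^ k

theorem charlier_orthogonality (a : ℝ) (ha : 0 < a) (m n : ℕ) :
    HasSum (fun x : ℕ =>
        (a ^ x / (x.factorial : ℝ)) * Charlier m x a * Charlier n x a)
      (if m = n then (a ^ m)⁻¹ * Real.exp a * (m.factorial : ℝ) else 0) ∧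
    Summable (fun x : ℕ =>
      |(a ^ x / (x.factorial : ℝ)) * Charlier m x a * Charlier n x a|) := by
  have ha' : a ≠ 0 := ne_of_gt ha
  set base : ℕ → ℕ → ℕ → ℝ :=
    fun j k x => a ^ x / (x.factorial : ℝ) * (x.choose j : ℝ) * (x.choose k : ℝ) with hbase
  set T : ℕ → ℕ → ℝ := fun j k => ∑ i ∈ range (k + 1),
      (a ^ j / (j.factorial : ℝ) * (j.choose i : ℝ)) *
        (Real.exp a * (a ^ (k - i) / ((k - i).factorial : ℝ))) with hT
  set c : ℕ → ℕ → ℝ := fun m j => (j.factorial : ℝ) * (m.choose j) * (-1 / a) ^ j with hc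
  have h1 : ∀ x : ℕ, a ^ x / (x.factorial : ℝ) * Charlier m x a * Charlier n x a
      = ∑ j ∈ range (m + 1), ∑ k ∈ range (n + 1), c m j * (c n k * base j k x) := by
    intro x
    simp only [Charlier, Finset.mul_sum, Finset.sum_mul]
    rw [Finset.sum_comm]
    apply Finset.sum_congr rfl
    intro j hj
    apply Finset.sum_congr rfl
    intro k _
    simp only [hbase, hc]
    ring
  have h2 : HasSum (fun x : ℕ =>
        ∑ j ∈ range (m + 1), ∑ k ∈ range (n + 1), c m j * (c n k * base j k x))
      (∑ j ∈ range (m + 1), ∑ k ∈ range (n + 1), c m j * (c n k * T j k)) := by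
    apply hasSum_sum
    intro j _
    apply hasSum_sum
    intro k _
    exact ((A_hs a j k).mul_left _).mul_left _
  have halg : (∑ j ∈ range (m + 1), ∑ k ∈ range (n + 1), c m j * (c n k * T j k))
      = (if m = n then (a ^ m)⁻¹ * Real.exp a * (m.factorial : ℝ) else 0) := by
    set w : ℕ → ℕ → ℝ := fun k i =>
      c n k * (Real.exp a * (a ^ (k - i) / ((k - i).factorial : ℝ))) with hw
    have step1 : ∀ j ∈ range (m + 1), ∀ k ∈ range (n + 1),
        c m j * (c n k * T j k)
          = ∑ i ∈ range (k + 1), ((m.choose j : ℝ) * (j.choose i : ℝ) * (-1) ^ j) * w k i := by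
      intro j _ k _
      simp only [hT, hc, hw, Finset.mul_sum]
      apply Finset.sum_congr rfl
      intro i _
      have hj : (j.factorial : ℝ) ≠ 0 := Nat.cast_ne_zero.mpr (Nat.factorial_ne_zero _)
      field_simp
      have hj' : a ^ j * a⁻¹ ^ j = 1 := by rw [← mul_pow, mul_inv_cancel₀ ha', one_pow]
      linear_combination ((m.choose j : ℝ) * a⁻¹ ^ k * (n.choose k : ℝ) * (j.choose i : ℝ) * (-1) ^ j * (-1) ^ k) * hj'
    rw [Finset.sum_congr rfl (fun j hj => Finset.sum_congr rfl (step1 j hj))]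
    rw [Finset.sum_comm]
    have step2 : ∀ k ∈ range (n + 1),
        (∑ j ∈ range (m + 1), ∑ i ∈ range (k + 1),
            ((m.choose j : ℝ) * (j.choose i : ℝ) * (-1) ^ j) * w k i)
          = (if m ≤ k then (-1 : ℝ) ^ m * w k m else 0) := by
      intro k _
      rw [Finset.sum_comm]
      have : ∀ i ∈ range (k + 1),
          (∑ j ∈ range (m + 1), ((m.choose j : ℝ) * (j.choose i : ℝ) * (-1) ^ j) * w k i)
            = (if i = m then (-1 : ℝ) ^ m else 0) * w k i := by
        intro i _
        rw [← Finset.sum_mul, K_id]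
      rw [Finset.sum_congr rfl this]
      simp only [ite_mul, zero_mul]
      rw [Finset.sum_ite_eq' (range (k + 1)) m]
      simp [Nat.lt_succ_iff]
    rw [Finset.sum_congr rfl step2]
    have step3 : ∀ k ∈ range (n + 1),
        (if m ≤ k then (-1 : ℝ) ^ m * w k m else 0)
          = ((a ^ m)⁻¹ * Real.exp a * (m.factorial : ℝ) * (-1) ^ m)
              * ((n.choose k : ℝ) * (k.choose m : ℝ) * (-1) ^ k) := by
      intro k _
      by_cases hmk : m ≤ k
      · rw [if_pos hmk]
        have hfac : (k.factorial : ℝ)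
            = (k.choose m : ℝ) * (m.factorial : ℝ) * ((k - m).factorial : ℝ) := by
          exact_mod_cast (Nat.choose_mul_factorial_mul_factorial hmk).symm
        have hpow : a ^ k = a ^ m * a ^ (k - m) := by
          rw [← pow_add]
          congr 1
          omega
        simp only [hw, hc, hfac]
        have hkm : ((k - m).factorial : ℝ) ≠ 0 := Nat.cast_ne_zero.mpr (Nat.factorial_ne_zero _)
        have hm : (m.factorial : ℝ) ≠ 0 := Nat.cast_ne_zero.mpr (Nat.factorial_ne_zero _)
        field_simp
        have hk : (-(1 / a)) ^ k * a ^ k = (-1) ^ k := by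
          rw [← mul_pow, neg_mul, one_div, inv_mul_cancel₀ ha']
        linear_combination ((k.choose m : ℝ) * (n.choose k : ℝ)) * hk - ((k.choose m : ℝ) * (n.choose k : ℝ) * (-(1 / a)) ^ k) * hpow
      · rw [if_neg hmk]
        rw [Nat.choose_eq_zero_of_lt (show k < m by omega)]
        simp
    rw [Finset.sum_congr rfl step3, ← Finset.mul_sum, K_id n m]
    by_cases hmn : m = n
    · subst hmn
      rw [if_pos rfl, if_pos rfl]
      have hone : ((-1 : ℝ)) ^ m * (-1) ^ m = 1 := by
        rw [← pow_add]
        exact Even.neg_one_pow ⟨m, rfl⟩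
      rw [mul_assoc, hone, mul_one]
    · rw [if_neg hmn, if_neg hmn, mul_zero]
  constructor
  · rw [← halg]
    have heq : (fun x : ℕ => a ^ x / (x.factorial : ℝ) * Charlier m x a * Charlier n x a)
        = fun x => ∑ j ∈ range (m + 1), ∑ k ∈ range (n + 1), c m j * (c n k * base j k x) :=
      funext h1
    rw [heq]
    exact h2
  · have hG : HasSum (fun x : ℕ =>
        ∑ j ∈ range (m + 1), ∑ k ∈ range (n + 1), |c m j * c n k| * base j k x)
        (∑ j ∈ range (m + 1), ∑ k ∈ range (n + 1), |c m j * c n k| * T j k) := by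
      apply hasSum_sum
      intro j _
      apply hasSum_sum
      intro k _
      exact (A_hs a j k).mul_left _
    apply Summable.of_nonneg_of_le (fun x => abs_nonneg _) _ hG.summable
    intro x
    rw [h1 x]
    refine (Finset.abs_sum_le_sum_abs _ _).trans (Finset.sum_le_sum fun j _ => ?_)
    refine (Finset.abs_sum_le_sum_abs _ _).trans (Finset.sum_le_sum fun k _ => ?_)
    have hb : (0 : ℝ) ≤ base j k x := by
      simp only [hbase]
      positivity
    have heq2 : |c m j * (c n k * base j k x)| = |c m j * c n k| * base j k x := by
      rw [show c m j * (c n k * base j k x) = c m j * c n k * base j k x by ring,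
        abs_mul, abs_of_nonneg hb]
    exact le_of_eq heq2
end

section
/- For all nonnegative integers m and x, the Meixner polynomial satisfies the difference equation (c−1)·m·M_m(x; α, c) = c·(x+α)·M_m(x+1; α, c) − (x + (x+α)·c)·M_m(x; α, c) + x·M_m(x−1; α, c), where the last term is interpreted as 0 when x = 0. -/
noncomputable def poch (α : ℝ) (k : ℕ) : ℝ := ∏ i ∈ Finset.range k, (α + i)

noncomputable def Meixner (m x : ℕ) (α c : ℝ) : ℝ :=
  ∑ k ∈ Finset.range (m + 1),
    ((k.factorial : ℝ) / poch α k) * (m.choose k) * (x.choose k) * (1 - 1 / c) ^ k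

lemma poch_succ (α : ℝ) (k : ℕ) : poch α (k+1) = poch α k * (α + k) := by
  simp [poch, Finset.prod_range_succ]

lemma poch_ne_zero (α : ℝ) (hα : ∀ k : ℕ, α ≠ -(k : ℝ)) (k : ℕ) : poch α k ≠ 0 := by
  induction k with
  | zero => simp [poch]
  | succ n ih =>
    rw [poch_succ]
    refine mul_ne_zero ih fun h => hα n ?_
    linarith

lemma cast_choose_succ (n j : ℕ) :
    ((j:ℝ)+1) * (n.choose (j+1)) = ((n:ℝ) - j) * (n.choose j) := by
  rcases le_or_gt j n with h | h
  · have h2 := congrArg (Nat.cast (R := ℝ)) (Nat.choose_succ_right_eq n j)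
    push_cast [Nat.cast_sub h] at h2
    linarith
  · rw [Nat.choose_eq_zero_of_lt h, Nat.choose_eq_zero_of_lt (Nat.lt_succ_of_lt h)]
    ring

lemma x_mul_choose (x k : ℕ) :
    (x:ℝ) * ((x-1).choose k) = ((k:ℝ)+1) * (x.choose (k+1)) := by
  cases x with
  | zero => simp
  | succ n =>
    simp only [Nat.succ_sub_one]
    have h2 := congrArg (Nat.cast (R := ℝ)) (Nat.add_one_mul_choose_eq n k)
    push_cast at h2 ⊢
    linarith

noncomputable def tcoef (α : ℝ) (m k : ℕ) : ℝ := (k.factorial : ℝ) / poch α k * (m.choose k)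

lemma tcoef_succ (α : ℝ) (hα : ∀ k : ℕ, α ≠ -(k : ℝ)) (m k : ℕ) :
    tcoef α m (k+1) * (α + k) = ((m:ℝ) - k) * tcoef α m k := by
  have hp := poch_ne_zero α hα k
  have hA : α + (k:ℝ) ≠ 0 := fun h => hα k (by linarith)
  have key : (((k+1).factorial : ℝ)) * (m.choose (k+1)) =
      ((m:ℝ) - k) * ((k.factorial : ℝ) * m.choose k) := by
    have h1 := cast_choose_succ m k
    push_cast [Nat.factorial_succ]
    nlinarith [h1]
  unfold tcoef
  rw [poch_succ]
  field_simp
  linear_combination key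

lemma key_step (c b α : ℝ) (m x k : ℕ) (tk tk1 : ℝ)
    (hb : c * b = c - 1) (htk : tk1 * (α + (k:ℝ)) = ((m:ℝ) - k) * tk) :
    c*((x:ℝ)+α)*(tk1*(((x+1).choose (k+1):ℕ))*b^(k+1))
      + (x:ℝ)*(tk1*(((x-1).choose (k+1):ℕ))*b^(k+1))
      - ((x:ℝ)+((x:ℝ)+α)*c)*(tk1*((x.choose (k+1):ℕ))*b^(k+1))
      - (c-1)*m*(tk1*((x.choose (k+1):ℕ))*b^(k+1))
    = (c-1)*((m:ℝ)-k)*tk*b^k*((x.choose k:ℕ))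
      - (c-1)*((m:ℝ)-(k+1))*tk1*b^(k+1)*((x.choose (k+1):ℕ)) := by
  have hc1 : (((x+1).choose (k+1) : ℕ) : ℝ) = (x.choose k : ℝ) + (x.choose (k+1) : ℝ) := by
    push_cast [Nat.choose_succ_succ]
    ring
  have hx := x_mul_choose x (k+1)
  have hch2 := cast_choose_succ x (k+1)
  have hch1 := cast_choose_succ x k
  rw [hc1]
  push_cast at hx hch2 hch1 ⊢
  linear_combination (tk1 * b^(k+1)) * hx + (tk1 * b^(k+1)) * hch2
    - (c * tk1 * b^(k+1)) * hch1 + (c * b^(k+1) * (x.choose k : ℝ)) * htk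
    + (((m:ℝ)-k) * tk * b^k * (x.choose k : ℝ)) * hb

noncomputable def Hfun (c b α : ℝ) (m x k : ℕ) : ℝ :=
  (c-1) * ((m:ℝ) - k) * tcoef α m k * b^k * (x.choose k)

lemma main_sum (α : ℝ) (hα : ∀ k : ℕ, α ≠ -(k : ℝ)) (c b : ℝ) (hb : c * b = c - 1)
    (m x : ℕ) :
    (c - 1) * m * (∑ k ∈ Finset.range (m+1), tcoef α m k * (x.choose k) * b^k) =
      c * ((x:ℝ) + α) * (∑ k ∈ Finset.range (m+1), tcoef α m k * ((x+1).choose k) * b^k)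
        - ((x : ℝ) + ((x : ℝ) + α) * c) * (∑ k ∈ Finset.range (m+1), tcoef α m k * (x.choose k) * b^k)
        + (x : ℝ) * (∑ k ∈ Finset.range (m+1), tcoef α m k * ((x-1).choose k) * b^k) := by
  have main : ∑ k ∈ Finset.range (m+1),
      (c*((x:ℝ)+α)*(tcoef α m k*(((x+1).choose k:ℕ))*b^k)
        + (x:ℝ)*(tcoef α m k*(((x-1).choose k:ℕ))*b^k)
        - ((x:ℝ)+((x:ℝ)+α)*c)*(tcoef α m k*((x.choose k:ℕ))*b^k)
        - (c-1)*m*(tcoef α m k*((x.choose k:ℕ))*b^k)) = 0 := by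
    rw [Finset.sum_range_succ']
    have hstep : ∑ k ∈ Finset.range m,
        (c*((x:ℝ)+α)*(tcoef α m (k+1)*(((x+1).choose (k+1):ℕ))*b^(k+1))
          + (x:ℝ)*(tcoef α m (k+1)*(((x-1).choose (k+1):ℕ))*b^(k+1))
          - ((x:ℝ)+((x:ℝ)+α)*c)*(tcoef α m (k+1)*((x.choose (k+1):ℕ))*b^(k+1))
          - (c-1)*m*(tcoef α m (k+1)*((x.choose (k+1):ℕ))*b^(k+1)))
        = Hfun c b α m x 0 - Hfun c b α m x m := by
      rw [Finset.sum_congr rfl (fun k _ => ?_), Finset.sum_range_sub' (Hfun c b α m x) m]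
      have h := key_step c b α m x k (tcoef α m k) (tcoef α m (k+1)) hb (tcoef_succ α hα m k)
      unfold Hfun
      push_cast
      linear_combination h
    rw [hstep]
    have h0 : c*((x:ℝ)+α)*(tcoef α m 0*(((x+1).choose 0:ℕ))*b^0)
        + (x:ℝ)*(tcoef α m 0*(((x-1).choose 0:ℕ))*b^0)
        - ((x:ℝ)+((x:ℝ)+α)*c)*(tcoef α m 0*((x.choose 0:ℕ))*b^0)
        - (c-1)*m*(tcoef α m 0*((x.choose 0:ℕ))*b^0) = -(Hfun c b α m x 0) := by
      simp [tcoef, poch, Hfun]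
      ring
    rw [h0]
    have hm : Hfun c b α m x m = 0 := by simp [Hfun]
    rw [hm]
    ring
  simp only [Finset.sum_sub_distrib, Finset.sum_add_distrib, ← Finset.mul_sum] at main
  linarith

theorem meixner_difference_equation (α : ℝ) (hα : ∀ k : ℕ, α ≠ -(k : ℝ)) (c : ℝ)
    (hc : c ≠ 0) (m x : ℕ) :
    (c - 1) * m * Meixner m x α c =
      c * (x + α) * Meixner m (x + 1) α c
        - ((x : ℝ) + ((x : ℝ) + α) * c) * Meixner m x α c
        + (x : ℝ) * Meixner m (x - 1) α c := by
  have hb : c * (1 - 1/c) = c - 1 := by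
    field_simp
  have hM : ∀ y : ℕ, Meixner m y α c =
      ∑ k ∈ Finset.range (m+1), tcoef α m k * (y.choose k) * (1 - 1/c)^k := fun y => rfl
  rw [hM x, hM (x+1), hM (x-1)]
  exact main_sum α hα c (1 - 1/c) hb m x
end

section
/- For all nonnegative integers m and x, the Charlier polynomial satisfies the difference equation −m·C_m(x; a) = a·C_m(x+1; a) − (x+a)·C_m(x; a) + x·C_m(x−1; a), where the last term is interpreted as 0 when x = 0. -/
lemma charlier_aux2 (x k : ℕ) :
    (x : ℝ) * ((x.choose k : ℝ) - ((x - 1).choose k : ℝ)) = k * (x.choose k) := by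
  cases x with
  | zero => cases k <;> simp
  | succ y =>
    cases k with
    | zero => simp
    | succ j =>
      have h := Nat.add_one_mul_choose_eq y j
      have hp : (y + 1).choose (j + 1) = y.choose j + y.choose (j + 1) :=
        Nat.choose_succ_succ y j
      have h' : ((y : ℝ) + 1) * (y.choose j : ℝ) = ((y + 1).choose (j + 1) : ℝ) * (j + 1) := by
        exact_mod_cast h
      simp only [Nat.succ_sub_one]
      push_cast [hp] at h' ⊢
      linarith [h']

theorem charlier_difference_equation (a : ℝ) (ha : a ≠ 0) (m x : ℕ) :
    -(m : ℝ) * Charlier m x a =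
      a * Charlier m (x + 1) a - ((x : ℝ) + a) * Charlier m x a
        + (x : ℝ) * Charlier m (x - 1) a := by
  set t : ℝ := -1 / a with ht
  have hta : t * a = -1 := by rw [ht]; field_simp
  -- Piece 1 : the (x+1) difference
  have h1 : a * Charlier m (x + 1) a - a * Charlier m x a
      = ∑ k ∈ Finset.range (m + 1),
          (((m : ℝ) - k) * -((k.factorial : ℝ) * (m.choose k) * (x.choose k) * t ^ k)) := by
    have e1 : a * Charlier m (x + 1) a - a * Charlier m x a
        = ∑ k ∈ Finset.range (m + 1),
            a * ((k.factorial : ℝ) * (m.choose k) *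
              (((x + 1).choose k : ℝ) - (x.choose k : ℝ)) * t ^ k) := by
      rw [Charlier, Charlier, Finset.mul_sum, Finset.mul_sum, ← Finset.sum_sub_distrib]
      exact Finset.sum_congr rfl fun k _ => by ring
    rw [e1, Finset.sum_range_succ']
    have e2 : a * ((Nat.factorial 0 : ℝ) * (m.choose 0) *
        (((x + 1).choose 0 : ℝ) - (x.choose 0 : ℝ)) * t ^ 0) = 0 := by simp
    rw [e2, add_zero]
    rw [Finset.sum_range_succ]
    have e3 : ((m : ℝ) - m) * -((m.factorial : ℝ) * (m.choose m) * (x.choose m) * t ^ m) = 0 := by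
      ring
    rw [e3, add_zero]
    refine Finset.sum_congr rfl fun k hk => ?_
    have hkm : k < m := Finset.mem_range.mp hk
    have hp : (x + 1).choose (k + 1) = x.choose k + x.choose (k + 1) :=
      Nat.choose_succ_succ x k
    have hc : m.choose (k + 1) * (k + 1) = m.choose k * (m - k) :=
      Nat.choose_succ_right_eq m k
    have hc' : (m.choose (k + 1) : ℝ) * ((k : ℝ) + 1) = (m.choose k : ℝ) * ((m : ℝ) - k) := by
      have := congrArg (Nat.cast : ℕ → ℝ) hc
      push_cast [Nat.cast_sub hkm.le] at this
      linarith [this]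
    have hfac : ((k + 1).factorial : ℝ) = ((k : ℝ) + 1) * (k.factorial : ℝ) := by
      push_cast [Nat.factorial_succ]; ring
    push_cast [hp]
    rw [hfac, pow_succ]
    linear_combination ((k.factorial : ℝ) * (x.choose k : ℝ) * t ^ k * ((k : ℝ) + 1) *
        (m.choose (k + 1) : ℝ)) * hta - ((k.factorial : ℝ) * (x.choose k : ℝ) * t ^ k) * hc'
  -- Piece 2 : the (x-1) difference
  have h2 : (x : ℝ) * Charlier m (x - 1) a - (x : ℝ) * Charlier m x a
      = ∑ k ∈ Finset.range (m + 1),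
          (-(k : ℝ) * ((k.factorial : ℝ) * (m.choose k) * (x.choose k) * t ^ k)) := by
    rw [Charlier, Charlier, Finset.mul_sum, Finset.mul_sum, ← Finset.sum_sub_distrib]
    refine Finset.sum_congr rfl fun k _ => ?_
    have h := charlier_aux2 x k
    rw [← ht]
    linear_combination (-(k.factorial : ℝ) * (m.choose k : ℝ) * t ^ k) * h
  symm
  calc a * Charlier m (x + 1) a - ((x : ℝ) + a) * Charlier m x a
        + (x : ℝ) * Charlier m (x - 1) a
      = (a * Charlier m (x + 1) a - a * Charlier m x a)
        + ((x : ℝ) * Charlier m (x - 1) a - (x : ℝ) * Charlier m x a) := by ring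
    _ = ∑ k ∈ Finset.range (m + 1),
          (-(m : ℝ) * ((k.factorial : ℝ) * (m.choose k) * (x.choose k) * t ^ k)) := by
        rw [h1, h2, ← Finset.sum_add_distrib]
        exact Finset.sum_congr rfl fun k _ => by ring
    _ = -(m : ℝ) * Charlier m x a := by rw [Charlier, Finset.mul_sum]
end
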